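/- arXiv:1908.10393 — 2 statements merged into one kernel-verified Lean document; each statement's English description precedes it below -/
import Mathlib

section
/- Let ρ be a unital measuring, i.e. ρ satisfies conditions (1)–(4). Then for all l ∈ H^L, r ∈ H^R, k ∈ H and a ∈ A one has (lr)·(k·a) = (lrk)·a; that is, h·(k·a) = hk·a for every h in the subalgebra H^L H^R. -/
open scoped TensorProduct

/-- The data of a weak bialgebra structure (together with an antipode and its
inverse) on a `k`-algebra `H`: a comultiplication `Δ`, a counit `ε`, an
antipode `S` and its inverse `Sinv`. -/
structure WeakHopfData (k H : Type*) [Field k] [Ring H] [Algebra k H] where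
  Δ : H →ₗ[k] H ⊗[k] H
  ε : H →ₗ[k] k
  S : H →ₗ[k] H
  Sinv : H →ₗ[k] H

section

variable {k H A : Type*} [Field k] [Ring H] [Algebra k H] [Ring A] [Algebra k A]

/-- `Π^L(h) = ε(1⁽¹⁾h)1⁽²⁾`. -/
noncomputable def piL (W : WeakHopfData k H) (h : H) : H :=
  (TensorProduct.lid k H) ((LinearMap.rTensor H (W.ε ∘ₗ LinearMap.mulRight k h)) (W.Δ 1))

/-- `Π^R(h) = 1⁽¹⁾ε(h1⁽²⁾)`. -/
noncomputable def piR (W : WeakHopfData k H) (h : H) : H :=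
  (TensorProduct.rid k H) ((LinearMap.lTensor H (W.ε ∘ₗ LinearMap.mulLeft k h)) (W.Δ 1))

/-- `H^L = im(Π^L)`. -/
def HL (W : WeakHopfData k H) : Set H := Set.range (piL W)

/-- `H^R = im(Π^R)`. -/
def HR (W : WeakHopfData k H) : Set H := Set.range (piR W)

/-- The axioms of a weak Hopf algebra with bijective antipode, where Sweedler
sums are expressed via arbitrary finite representations of the comultiplication. -/
structure IsWeakHopf (W : WeakHopfData k H) : Prop where
  coassoc : ∀ h : H,
    (TensorProduct.assoc k H H H) ((LinearMap.rTensor H W.Δ) (W.Δ h)) =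
      (LinearMap.lTensor H W.Δ) (W.Δ h)
  counit_left : ∀ h : H, (TensorProduct.lid k H) ((LinearMap.rTensor H W.ε) (W.Δ h)) = h
  counit_right : ∀ h : H, (TensorProduct.rid k H) ((LinearMap.lTensor H W.ε) (W.Δ h)) = h
  comul_mul : ∀ h l : H, W.Δ (h * l) = W.Δ h * W.Δ l
  weak_comul_one₁ : (LinearMap.lTensor H W.Δ) (W.Δ 1) =
    (TensorProduct.assoc k H H H) (W.Δ 1 ⊗ₜ[k] (1 : H)) * ((1 : H) ⊗ₜ[k] W.Δ 1)
  weak_comul_one₂ : (LinearMap.lTensor H W.Δ) (W.Δ 1) =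
    ((1 : H) ⊗ₜ[k] W.Δ 1) * (TensorProduct.assoc k H H H) (W.Δ 1 ⊗ₜ[k] (1 : H))
  weak_counit : ∀ h l m : H, ∀ (n : ℕ) (x y : Fin n → H),
    W.Δ l = ∑ i, x i ⊗ₜ[k] y i →
      W.ε (h * l * m) = ∑ i, W.ε (h * x i) * W.ε (y i * m) ∧
      W.ε (h * l * m) = ∑ i, W.ε (h * y i) * W.ε (x i * m)
  antipode_left : ∀ h : H, ∀ (n : ℕ) (x y : Fin n → H),
    W.Δ h = ∑ i, x i ⊗ₜ[k] y i → ∑ i, x i * W.S (y i) = piL W h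
  antipode_right : ∀ h : H, ∀ (n : ℕ) (x y : Fin n → H),
    W.Δ h = ∑ i, x i ⊗ₜ[k] y i → ∑ i, W.S (x i) * y i = piR W h
  antipode_mid : ∀ h : H, ∀ (n : ℕ) (x y : Fin n → H),
    W.Δ h = ∑ i, x i ⊗ₜ[k] y i →
      ∀ (m : Fin n → ℕ) (u v : (i : Fin n) → Fin (m i) → H),
        (∀ i, W.Δ (y i) = ∑ j, u i j ⊗ₜ[k] v i j) →
          ∑ i, ∑ j, W.S (x i) * u i j * W.S (v i j) = W.S h
  S_Sinv : ∀ h : H, W.S (W.Sinv h) = h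
  Sinv_S : ∀ h : H, W.Sinv (W.S h) = h

/-- Condition (1): `h·1_A = Π^L(h)·1_A`. -/
def cond1 (W : WeakHopfData k H) (ρ : H →ₗ[k] A →ₗ[k] A) : Prop :=
  ∀ h : H, ρ h 1 = ρ (piL W h) 1

/-- Condition (2): `h·(aa') = (h⁽¹⁾·a)(h⁽²⁾·a')`. -/
def cond2 (W : WeakHopfData k H) (ρ : H →ₗ[k] A →ₗ[k] A) : Prop :=
  ∀ (h : H) (a a' : A) (n : ℕ) (x y : Fin n → H),
    W.Δ h = ∑ i, x i ⊗ₜ[k] y i → ρ h (a * a') = ∑ i, ρ (x i) a * ρ (y i) a'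

/-- Condition (3): `S⁻¹(l)h·a = (h·a)(l·1_A)` and `lh·a = (l·1_A)(h·a)` for `l ∈ H^L`. -/
def cond3 (W : WeakHopfData k H) (ρ : H →ₗ[k] A →ₗ[k] A) : Prop :=
  ∀ (h : H) (a : A), ∀ l ∈ HL W,
    ρ (W.Sinv l * h) a = ρ h a * ρ l 1 ∧ ρ (l * h) a = ρ l 1 * ρ h a

/-- Condition (4): `1·a = a`. -/
def cond4 (ρ : H →ₗ[k] A →ₗ[k] A) : Prop := ∀ a : A, ρ 1 a = a

/-- Condition (5). -/
def cond5 (W : WeakHopfData k H) (ρ : H →ₗ[k] A →ₗ[k] A) (σ : H → H → A) : Prop :=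
  ∀ (h g : H), ∀ l ∈ HL W,
    σ (l * h) g = ρ l 1 * σ h g ∧ σ (W.Sinv l * h) g = σ h g * ρ l 1

/-- Condition (6): `(h⁽¹⁾·(l·1_A))σ(h⁽²⁾,k) = σ(h,lk)` for `l ∈ H^L`. -/
def cond6 (W : WeakHopfData k H) (ρ : H →ₗ[k] A →ₗ[k] A) (σ : H → H → A) : Prop :=
  ∀ (h g : H), ∀ l ∈ HL W, ∀ (n : ℕ) (x y : Fin n → H),
    W.Δ h = ∑ i, x i ⊗ₜ[k] y i →
      ∑ i, ρ (x i) (ρ l 1) * σ (y i) g = σ h (l * g)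

/-- Condition (7): `σ(1,h) = σ(h,1) = h·1_A`. -/
def cond7 (ρ : H →ₗ[k] A →ₗ[k] A) (σ : H → H → A) : Prop :=
  ∀ h : H, σ 1 h = ρ h 1 ∧ σ h 1 = ρ h 1

/-- Condition (8), the cocycle condition. -/
def cond8 (W : WeakHopfData k H) (ρ : H →ₗ[k] A →ₗ[k] A) (σ : H → H → A) : Prop :=
  ∀ (h g m : H) (n₁ : ℕ) (x₁ y₁ : Fin n₁ → H) (n₂ : ℕ) (x₂ y₂ : Fin n₂ → H)
    (n₃ : ℕ) (x₃ y₃ : Fin n₃ → H),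
    W.Δ h = ∑ i, x₁ i ⊗ₜ[k] y₁ i → W.Δ g = ∑ i, x₂ i ⊗ₜ[k] y₂ i →
    W.Δ m = ∑ i, x₃ i ⊗ₜ[k] y₃ i →
      ∑ i, ∑ j, ∑ p, ρ (x₁ i) (σ (x₂ j) (x₃ p)) * σ (y₁ i) (y₂ j * y₃ p) =
        ∑ i, ∑ j, σ (x₁ i) (x₂ j) * σ (y₁ i * y₂ j) m

/-- Condition (9), the twisted module condition. -/
def cond9 (W : WeakHopfData k H) (ρ : H →ₗ[k] A →ₗ[k] A) (σ : H → H → A) : Prop :=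
  ∀ (h g : H) (a : A) (n : ℕ) (x y : Fin n → H) (m : ℕ) (u v : Fin m → H),
    W.Δ h = ∑ i, x i ⊗ₜ[k] y i → W.Δ g = ∑ j, u j ⊗ₜ[k] v j →
      ∑ i, ∑ j, ρ (x i) (ρ (u j) a) * σ (y i) (v j) =
        ∑ i, ∑ j, σ (x i) (u j) * ρ (y i * v j) a

/-- Condition (10): `h·(l·1_A) = hl·1_A` for `l ∈ H^L`. -/
def cond10 (W : WeakHopfData k H) (ρ : H →ₗ[k] A →ₗ[k] A) : Prop :=
  ∀ h : H, ∀ l ∈ HL W, ρ h (ρ l 1) = ρ (h * l) 1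

/-- Condition (11): `h·(l·1_A) = hl·1_A` for all `h, l ∈ H`. -/
def cond11 (ρ : H →ₗ[k] A →ₗ[k] A) : Prop :=
  ∀ h l : H, ρ h (ρ l 1) = ρ (h * l) 1

/-- Condition (12): `σ(h,l) = σ(hl,1)` for `l ∈ H^L`. -/
def cond12 (W : WeakHopfData k H) (σ : H → H → A) : Prop :=
  ∀ h : H, ∀ l ∈ HL W, σ h l = σ (h * l) 1

/-- Condition (13). -/
def cond13 (W : WeakHopfData k H) (ρ : H →ₗ[k] A →ₗ[k] A) (σbar : H → H → A) : Prop :=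
  ∀ (h g : H) (n : ℕ) (x y : Fin n → H) (m : ℕ) (u v : Fin m → H),
    W.Δ h = ∑ i, x i ⊗ₜ[k] y i → W.Δ g = ∑ j, u j ⊗ₜ[k] v j →
      σbar h g = ∑ i, ∑ j, ρ (x i * u j) 1 * σbar (y i) (v j)

/-- Condition (14). -/
def cond14 (W : WeakHopfData k H) (ρ : H →ₗ[k] A →ₗ[k] A) (σbar : H → H → A) : Prop :=
  ∀ (h g : H), ∀ l ∈ HL W,
    σbar (l * h) g = ρ l 1 * σbar h g ∧ σbar (W.Sinv l * h) g = σbar h g * ρ l 1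

/-- Condition (15). -/
def cond15 (W : WeakHopfData k H) (ρ : H →ₗ[k] A →ₗ[k] A) (σbar : H → H → A) : Prop :=
  ∀ (h g : H), ∀ l ∈ HL W, ∀ (n : ℕ) (x y : Fin n → H),
    W.Δ h = ∑ i, x i ⊗ₜ[k] y i →
      ∑ i, σbar (x i) g * ρ (y i) (ρ l 1) = σbar h (W.Sinv l * g)

/-- Condition (16). -/
def cond16 (W : WeakHopfData k H) (ρ : H →ₗ[k] A →ₗ[k] A) (σ σbar : H → H → A) : Prop :=
  ∀ (h g : H) (n : ℕ) (x y : Fin n → H) (m : ℕ) (u v : Fin m → H),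
    W.Δ h = ∑ i, x i ⊗ₜ[k] y i → W.Δ g = ∑ j, u j ⊗ₜ[k] v j →
      (∑ i, ∑ j, σ (x i) (u j) * σbar (y i) (v j) = ρ h (ρ g 1)) ∧
      (∑ i, ∑ j, σbar (x i) (u j) * σ (y i) (v j) = ρ (h * g) 1)

/-- Condition (17), the cocycle condition for `ς : H ⊗ H → A`. -/
def cond17 (W : WeakHopfData k H) (ρ : H →ₗ[k] A →ₗ[k] A) (ς : H ⊗[k] H → A) : Prop :=
  ∀ (h g m : H) (n₁ : ℕ) (x₁ y₁ : Fin n₁ → H) (n₂ : ℕ) (x₂ y₂ : Fin n₂ → H)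
    (n₃ : ℕ) (x₃ y₃ : Fin n₃ → H),
    W.Δ h = ∑ i, x₁ i ⊗ₜ[k] y₁ i → W.Δ g = ∑ i, x₂ i ⊗ₜ[k] y₂ i →
    W.Δ m = ∑ i, x₃ i ⊗ₜ[k] y₃ i →
      ∑ i, ∑ j, ∑ p, ρ (x₁ i) (ς (x₂ j ⊗ₜ[k] x₃ p)) * ς (y₁ i ⊗ₜ[k] (y₂ j * y₃ p)) =
        ∑ i, ∑ j, ς (x₁ i ⊗ₜ[k] x₂ j) * ς ((y₁ i * y₂ j) ⊗ₜ[k] m)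

/-- Condition (18), the twisted module condition for `ς : H ⊗ H → A`. -/
def cond18 (W : WeakHopfData k H) (ρ : H →ₗ[k] A →ₗ[k] A) (ς : H ⊗[k] H → A) : Prop :=
  ∀ (h g : H) (a : A) (n : ℕ) (x y : Fin n → H) (m : ℕ) (u v : Fin m → H),
    W.Δ h = ∑ i, x i ⊗ₜ[k] y i → W.Δ g = ∑ j, u j ⊗ₜ[k] v j →
      ∑ i, ∑ j, ρ (x i) (ρ (u j) a) * ς (y i ⊗ₜ[k] v j) =
        ∑ i, ∑ j, ς (x i ⊗ₜ[k] u j) * ρ (y i * v j) a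

/-- Condition (19). -/
def cond19 (W : WeakHopfData k H) (ρ : H →ₗ[k] A →ₗ[k] A) (ς : H ⊗[k] H → A) : Prop :=
  ∀ (h g : H) (n : ℕ) (x y : Fin n → H) (m : ℕ) (u v : Fin m → H),
    W.Δ h = ∑ i, x i ⊗ₜ[k] y i → W.Δ g = ∑ j, u j ⊗ₜ[k] v j →
      ς (h ⊗ₜ[k] g) = ∑ i, ∑ j, ς (x i ⊗ₜ[k] u j) * ρ (y i * v j) 1

/-- Condition (20). -/
def cond20 (W : WeakHopfData k H) (ρ : H →ₗ[k] A →ₗ[k] A) (ς : H ⊗[k] H → A) : Prop :=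
  ∀ (h : H) (n : ℕ) (x y : Fin n → H) (m : ℕ) (u v : Fin m → H),
    W.Δ h = ∑ i, x i ⊗ₜ[k] y i → W.Δ 1 = ∑ j, u j ⊗ₜ[k] v j →
      ρ h 1 = ∑ i, ∑ j, ρ (x i) (ρ (u j) 1) * ς (y i ⊗ₜ[k] v j)

/-- Condition (21). -/
def cond21 (W : WeakHopfData k H) (ρ : H →ₗ[k] A →ₗ[k] A) (ς : H ⊗[k] H → A) : Prop :=
  ∀ (h : H) (m : ℕ) (u v : Fin m → H),
    W.Δ 1 = ∑ j, u j ⊗ₜ[k] v j →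
      ρ h 1 = ∑ j, ρ (u j) 1 * ς (v j ⊗ₜ[k] h)

/-- Condition (22): `a(1⁽¹⁾·1_A) ⊗ 1⁽²⁾ = (1⁽¹⁾·a) ⊗ 1⁽²⁾` in `A ⊗ H`. -/
def cond22 (W : WeakHopfData k H) (ρ : H →ₗ[k] A →ₗ[k] A) : Prop :=
  ∀ (a : A) (m : ℕ) (u v : Fin m → H),
    W.Δ 1 = ∑ j, u j ⊗ₜ[k] v j →
      (∑ j, (a * ρ (u j) 1) ⊗ₜ[k] v j) = ∑ j, (ρ (u j) a) ⊗ₜ[k] v j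

/-- Condition (23). -/
def cond23 (W : WeakHopfData k H) (ρ : H →ₗ[k] A →ₗ[k] A) (ςbar : H ⊗[k] H → A) : Prop :=
  ∀ (h g : H) (n : ℕ) (x y : Fin n → H) (m : ℕ) (u v : Fin m → H),
    W.Δ h = ∑ i, x i ⊗ₜ[k] y i → W.Δ g = ∑ j, u j ⊗ₜ[k] v j →
      ςbar (h ⊗ₜ[k] g) = ∑ i, ∑ j, ρ (x i * u j) 1 * ςbar (y i ⊗ₜ[k] v j)

/-- Condition (24). -/
def cond24 (W : WeakHopfData k H) (ρ : H →ₗ[k] A →ₗ[k] A) (ς ςbar : H ⊗[k] H → A) : Prop :=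
  ∀ (h g : H) (n : ℕ) (x y : Fin n → H) (m : ℕ) (u v : Fin m → H),
    W.Δ h = ∑ i, x i ⊗ₜ[k] y i → W.Δ g = ∑ j, u j ⊗ₜ[k] v j →
      (∑ i, ∑ j, ς (x i ⊗ₜ[k] u j) * ςbar (y i ⊗ₜ[k] v j) = ρ (h * g) 1) ∧
      (∑ i, ∑ j, ςbar (x i ⊗ₜ[k] u j) * ς (y i ⊗ₜ[k] v j) = ρ (h * g) 1)

/-- `σ` is `H^R`-balanced: `σ(hr,k) = σ(h,rk)` for `r ∈ H^R`. -/
def HRBalanced (W : WeakHopfData k H) (σ : H → H → A) : Prop :=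
  ∀ (h g : H), ∀ r ∈ HR W, σ (h * r) g = σ h (r * g)

/-- `σbar` is `H^L`-balanced: `σbar(hl,k) = σbar(h,lk)` for `l ∈ H^L`. -/
def HLBalanced (W : WeakHopfData k H) (σbar : H → H → A) : Prop :=
  ∀ (h g : H), ∀ l ∈ HL W, σbar (h * l) g = σbar h (l * g)

/-- The idempotent `∇ρ : A ⊗ H → A ⊗ H`, `a ⊗ h ↦ a(h⁽¹⁾·1_A) ⊗ h⁽²⁾`. -/
noncomputable def nabla (W : WeakHopfData k H) (ρ : H →ₗ[k] A →ₗ[k] A) :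
    A ⊗[k] H →ₗ[k] A ⊗[k] H :=
  (LinearMap.rTensor H (LinearMap.mul' k A ∘ₗ LinearMap.lTensor A (ρ.flip 1))) ∘ₗ
    (TensorProduct.assoc k A H H).symm.toLinearMap ∘ₗ LinearMap.lTensor A W.Δ

/-- The subspace `N` of `A ⊗ H` spanned by the elements
`a(l·1_A) ⊗ h - a ⊗ lh` with `l ∈ H^L`, so that `(A ⊗ H)/N = A ⊗_{H^L} H`. -/
def relN (W : WeakHopfData k H) (ρ : H →ₗ[k] A →ₗ[k] A) : Submodule k (A ⊗[k] H) :=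
  Submodule.span k
    {z | ∃ (a : A) (l h : H), l ∈ HL W ∧ z = (a * ρ l 1) ⊗ₜ[k] h - a ⊗ₜ[k] (l * h)}

/-- The map `σ̃(h,k) := (h⁽¹⁾k⁽¹⁾·1_A)σ̄(h⁽²⁾,k⁽²⁾)`. -/
noncomputable def sigmaTilde (W : WeakHopfData k H) (ρ : H →ₗ[k] A →ₗ[k] A)
    (σbar : H →ₗ[k] H →ₗ[k] A) : H → H → A := fun h g =>
  LinearMap.mul' k A
    ((TensorProduct.map ((ρ.flip 1) ∘ₗ LinearMap.mul' k H) (TensorProduct.lift σbar))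
      ((TensorProduct.tensorTensorTensorComm k H H H H) (W.Δ h ⊗ₜ[k] W.Δ g)))

end


section MyAux

set_option maxHeartbeats 1000000
set_option synthInstance.maxHeartbeats 400000

open TensorProduct LinearMap

variable {k H : Type*} [Field k] [Ring H] [Algebra k H]

lemma exists_fin_rep {M N : Type*} [AddCommMonoid M] [AddCommMonoid N] [Module k M] [Module k N]
    (x : M ⊗[k] N) : ∃ (n : ℕ) (f : Fin n → M) (g : Fin n → N), x = ∑ i, f i ⊗ₜ[k] g i := by
  induction x using TensorProduct.induction_on with
  | zero => exact ⟨0, ![], ![], by simp⟩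
  | tmul a b => exact ⟨1, ![a], ![b], by simp⟩
  | add x y hx hy =>
    obtain ⟨n, f, g, rfl⟩ := hx
    obtain ⟨m, p, q, rfl⟩ := hy
    refine ⟨n + m, Fin.append f p, Fin.append g q, ?_⟩
    rw [Fin.sum_univ_add]
    simp [Fin.append_left, Fin.append_right]

lemma piR_rep (W : WeakHopfData k H) (h : H) (n : ℕ) (u v : Fin n → H)
    (hrep : W.Δ 1 = ∑ j, u j ⊗ₜ[k] v j) :
    piR W h = ∑ j, W.ε (h * v j) • u j := by
  rw [piR, hrep, map_sum, map_sum]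
  simp [TensorProduct.rid_tmul]

lemma piL_rep (W : WeakHopfData k H) (h : H) (n : ℕ) (u v : Fin n → H)
    (hrep : W.Δ 1 = ∑ j, u j ⊗ₜ[k] v j) :
    piL W h = ∑ j, W.ε (u j * h) • v j := by
  rw [piL, hrep, map_sum, map_sum]
  simp [TensorProduct.lid_tmul]

/-- contraction of the third tensor factor against `ε(h·)`. -/
noncomputable def contr3 (W : WeakHopfData k H) (h : H) :
    H ⊗[k] (H ⊗[k] H) →ₗ[k] H ⊗[k] H :=
  lTensor H ((TensorProduct.rid k H).toLinearMap ∘ₗ lTensor H (W.ε ∘ₗ mulLeft k h))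

@[simp] lemma contr3_tmul (W : WeakHopfData k H) (h a b c : H) :
    contr3 W h (a ⊗ₜ[k] (b ⊗ₜ[k] c)) = W.ε (h * c) • (a ⊗ₜ[k] b) := by
  simp [contr3, TensorProduct.rid_tmul, TensorProduct.tmul_smul]

lemma contr3_assoc (W : WeakHopfData k H) (h : H) (w : H ⊗[k] H) (z : H) :
    contr3 W h ((TensorProduct.assoc k H H H) (w ⊗ₜ[k] z)) = W.ε (h * z) • w := by
  induction w using TensorProduct.induction_on with
  | zero => simp
  | tmul a b => simp [TensorProduct.assoc_tmul]
  | add x y hx hy => simp [TensorProduct.add_tmul, hx, hy, smul_add]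

/-- contraction of the middle tensor factor against `ε`. -/
noncomputable def contrMid (W : WeakHopfData k H) :
    H ⊗[k] (H ⊗[k] H) →ₗ[k] H ⊗[k] H :=
  lTensor H ((TensorProduct.lid k H).toLinearMap ∘ₗ rTensor H W.ε)

@[simp] lemma contrMid_tmul (W : WeakHopfData k H) (a b c : H) :
    contrMid W (a ⊗ₜ[k] (b ⊗ₜ[k] c)) = W.ε b • (a ⊗ₜ[k] c) := by
  simp [contrMid, TensorProduct.lid_tmul, TensorProduct.tmul_smul]

/-- `a ⊗ b ↦ S a * b`. -/
noncomputable def mulSR (W : WeakHopfData k H) : H ⊗[k] H →ₗ[k] H :=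
  mul' k H ∘ₗ rTensor H W.S

@[simp] lemma mulSR_tmul (W : WeakHopfData k H) (a b : H) :
    mulSR W (a ⊗ₜ[k] b) = W.S a * b := by simp [mulSR]

/-- `a ⊗ b ↦ a * S b`. -/
noncomputable def mulSL (W : WeakHopfData k H) : H ⊗[k] H →ₗ[k] H :=
  mul' k H ∘ₗ lTensor H W.S

@[simp] lemma mulSL_tmul (W : WeakHopfData k H) (a b : H) :
    mulSL W (a ⊗ₜ[k] b) = a * W.S b := by simp [mulSL]

/-- `a ⊗ (b ⊗ c) ↦ S a * (b * S c)`. -/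
noncomputable def triS (W : WeakHopfData k H) : H ⊗[k] (H ⊗[k] H) →ₗ[k] H :=
  mul' k H ∘ₗ TensorProduct.map W.S (mul' k H ∘ₗ lTensor H W.S)

@[simp] lemma triS_tmul (W : WeakHopfData k H) (a b c : H) :
    triS W (a ⊗ₜ[k] (b ⊗ₜ[k] c)) = W.S a * (b * W.S c) := by
  simp [triS]

lemma triS_assoc (W : WeakHopfData k H) (w : H ⊗[k] H) (z : H) :
    triS W ((TensorProduct.assoc k H H H) (w ⊗ₜ[k] z)) = mulSR W w * W.S z := by
  induction w using TensorProduct.induction_on with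
  | zero => simp
  | tmul a b => simp [TensorProduct.assoc_tmul, mul_assoc]
  | add x y hx hy => simp [TensorProduct.add_tmul, hx, hy, add_mul]

lemma mulSR_delta (W : WeakHopfData k H) (hW : IsWeakHopf W) (y : H) :
    mulSR W (W.Δ y) = piR W y := by
  obtain ⟨n, f, g, hr⟩ := exists_fin_rep (W.Δ y)
  rw [hr, map_sum]
  simpa using hW.antipode_right y n f g hr

lemma mulSL_delta (W : WeakHopfData k H) (hW : IsWeakHopf W) (y : H) :
    mulSL W (W.Δ y) = piL W y := by
  obtain ⟨n, f, g, hr⟩ := exists_fin_rep (W.Δ y)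
  rw [hr, map_sum]
  simpa using hW.antipode_left y n f g hr

lemma S_eq_sum (W : WeakHopfData k H) (hW : IsWeakHopf W) (x : H) (n : ℕ)
    (xs ys : Fin n → H) (hrep : W.Δ x = ∑ j, xs j ⊗ₜ[k] ys j) :
    W.S x = ∑ j, piR W (xs j) * W.S (ys j) := by
  have hch : ∀ j, ∃ (m : ℕ) (w : Fin m → H) (z : Fin m → H),
      W.Δ (ys j) = ∑ i, w i ⊗ₜ[k] z i := fun j => exists_fin_rep _
  choose m w z hwz using hch
  have hmid := hW.antipode_mid x n xs ys hrep m w z hwz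
  have e1 : ∑ j, ∑ i, W.S (xs j) * w j i * W.S (z j i) =
      triS W ((lTensor H W.Δ) (W.Δ x)) := by
    rw [hrep, map_sum (lTensor H W.Δ), map_sum (triS W)]
    refine Finset.sum_congr rfl fun j _ => ?_
    rw [lTensor_tmul, hwz j, TensorProduct.tmul_sum, map_sum]
    exact Finset.sum_congr rfl fun i _ => by rw [triS_tmul, mul_assoc]
  have e2 : triS W ((lTensor H W.Δ) (W.Δ x)) = ∑ j, mulSR W (W.Δ (xs j)) * W.S (ys j) := by
    rw [← hW.coassoc x, hrep, map_sum (rTensor H W.Δ),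
      map_sum (TensorProduct.assoc k H H H), map_sum (triS W)]
    exact Finset.sum_congr rfl fun j _ => by rw [rTensor_tmul, triS_assoc]
  rw [← hmid, e1, e2]
  exact Finset.sum_congr rfl fun j _ => by rw [mulSR_delta W hW]

lemma delta_piR (W : WeakHopfData k H) (hW : IsWeakHopf W) (h : H) (n : ℕ)
    (u v : Fin n → H) (hrep : W.Δ 1 = ∑ j, u j ⊗ₜ[k] v j) :
    W.Δ (piR W h) = ∑ j, u j ⊗ₜ[k] (piR W h * v j) := by
  have e0 : W.Δ (piR W h) =
      contr3 W h ((TensorProduct.assoc k H H H) ((rTensor H W.Δ) (W.Δ 1))) := by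
    rw [piR_rep W h n u v hrep, map_sum]
    conv_rhs => rw [hrep, map_sum (rTensor H W.Δ),
      map_sum (TensorProduct.assoc k H H H), map_sum (contr3 W h)]
    refine Finset.sum_congr rfl fun j _ => ?_
    rw [map_smul, rTensor_tmul, contr3_assoc]
  rw [e0, hW.coassoc 1, hW.weak_comul_one₂]
  conv_lhs => rw [hrep]
  rw [TensorProduct.tmul_sum, TensorProduct.sum_tmul, map_sum, Finset.sum_mul, map_sum]
  simp only [map_sum, TensorProduct.assoc_tmul, Finset.mul_sum,
    Algebra.TensorProduct.tmul_mul_tmul, one_mul, mul_one, contr3_tmul]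
  rw [Finset.sum_comm]
  refine Finset.sum_congr rfl fun j _ => ?_
  rw [piR_rep W h n u v hrep, Finset.sum_mul, TensorProduct.tmul_sum]
  exact Finset.sum_congr rfl fun i _ => by
    rw [smul_mul_assoc, TensorProduct.tmul_smul]

lemma piR_delta_one (W : WeakHopfData k H) (hW : IsWeakHopf W) (n : ℕ)
    (u v : Fin n → H) (hrep : W.Δ 1 = ∑ j, u j ⊗ₜ[k] v j) :
    ∑ j, piR W (u j) ⊗ₜ[k] v j = W.Δ (1 : H) := by
  have e1 : contrMid W ((lTensor H W.Δ) (W.Δ 1)) = W.Δ (1 : H) := by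
    conv_lhs => rw [hrep, map_sum (lTensor H W.Δ), map_sum (contrMid W)]
    conv_rhs => rw [hrep]
    refine Finset.sum_congr rfl fun j _ => ?_
    rw [lTensor_tmul]
    rw [contrMid, lTensor_tmul]
    congr 1
    exact hW.counit_left (v j)
  have e2 : contrMid W ((lTensor H W.Δ) (W.Δ 1)) =
      ∑ i, ∑ j, W.ε (u i * v j) • (u j ⊗ₜ[k] v i) := by
    rw [hW.weak_comul_one₂]
    conv_lhs => rw [hrep]
    rw [TensorProduct.tmul_sum, TensorProduct.sum_tmul, map_sum, Finset.sum_mul, map_sum]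
    simp only [map_sum, TensorProduct.assoc_tmul, Finset.mul_sum,
      Algebra.TensorProduct.tmul_mul_tmul, one_mul, mul_one, contrMid_tmul]
  calc ∑ j, piR W (u j) ⊗ₜ[k] v j
      = ∑ j, ∑ i, W.ε (u j * v i) • (u i ⊗ₜ[k] v j) := by
        refine Finset.sum_congr rfl fun j _ => ?_
        rw [piR_rep W (u j) n u v hrep, TensorProduct.sum_tmul]
        exact Finset.sum_congr rfl fun i _ => by rw [TensorProduct.smul_tmul']
    _ = W.Δ (1 : H) := by rw [← e2, e1]

lemma S_piR_eq (W : WeakHopfData k H) (hW : IsWeakHopf W) (h : H) :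
    W.S (piR W h) = piL W (piR W h) := by
  obtain ⟨n, u, v, hrep⟩ := exists_fin_rep (W.Δ (1 : H))
  have hA := delta_piR W hW h n u v hrep
  have hC := S_eq_sum W hW (piR W h) n u (fun j => piR W h * v j) hA
  have hD := piR_delta_one W hW n u v hrep
  set G : H ⊗[k] H →ₗ[k] H := mul' k H ∘ₗ lTensor H (W.S ∘ₗ mulLeft k (piR W h)) with hG
  have hGt : ∀ a b : H, G (a ⊗ₜ[k] b) = a * W.S (piR W h * b) := by
    intro a b; simp [hG]
  have e : ∑ j, piR W (u j) * W.S (piR W h * v j) = ∑ j, u j * W.S (piR W h * v j) := by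
    have h' := congrArg G hD
    rw [map_sum, hrep, map_sum] at h'
    simpa [hGt] using h'
  have hB : ∑ j, u j * W.S (piR W h * v j) = piL W (piR W h) := by
    have h' := mulSL_delta W hW (piR W h)
    rw [hA, map_sum] at h'
    simpa using h'
  rw [hC, e, hB]

end MyAux

/-- if `ρ` is a unital measuring (conditions (1)–(4)), then
`(lr)·(k·a) = (lrk)·a` for all `l ∈ H^L`, `r ∈ H^R`, `k ∈ H`, `a ∈ A`. -/
theorem statement0 {k H A : Type*} [Field k] [Ring H] [Algebra k H] [Ring A] [Algebra k A]
    (W : WeakHopfData k H) (hW : IsWeakHopf W) (ρ : H →ₗ[k] A →ₗ[k] A)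
    (h1 : cond1 W ρ) (h2 : cond2 W ρ) (h3 : cond3 W ρ) (h4 : cond4 ρ) :
    ∀ l ∈ HL W, ∀ r ∈ HR W, ∀ (g : H) (a : A),
      ρ (l * r) (ρ g a) = ρ (l * r * g) a := by
  intro l hl r hr g a
  obtain ⟨h, rfl⟩ := hr
  have hl' : W.S (piR W h) ∈ HL W := ⟨piR W h, (S_piR_eq W hW h).symm⟩
  have hr' : W.Sinv (W.S (piR W h)) = piR W h := hW.Sinv_S _
  rw [← hr']
  rw [(h3 (W.Sinv (W.S (piR W h))) (ρ g a) l hl).2]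
  rw [mul_assoc, (h3 (W.Sinv (W.S (piR W h)) * g) a l hl).2]
  rw [(h3 g a (W.S (piR W h)) hl').1]
  have q1 : ρ (W.Sinv (W.S (piR W h))) (ρ g a) = ρ g a * ρ (W.S (piR W h)) 1 := by
    have q := (h3 1 (ρ g a) (W.S (piR W h)) hl').1
    rw [mul_one, h4] at q
    exact q
  rw [q1]
end

section
/- Assume ρ is a unital measuring (conditions (1)–(4)), σ:H×H→A is a k-bilinear H^R-balanced map, and σ̄:H×H→A is a k-bilinear H^L-balanced map (σ̄(hl,k)=σ̄(h,lk) for all l∈H^L) satisfying conditions (13) and (16). Then σ̄(h⁽¹⁾,k⁽¹⁾)(h⁽²⁾·(k⁽²⁾·1_A)) = σ̄(h,k) for all h,k∈H. -/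
open scoped TensorProduct

lemma exists_rep {k M N : Type*} [Field k] [AddCommGroup M] [Module k M]
    [AddCommGroup N] [Module k N] (t : M ⊗[k] N) :
    ∃ (n : ℕ) (x : Fin n → M) (y : Fin n → N), t = ∑ i, x i ⊗ₜ[k] y i := by
  obtain ⟨S, hS⟩ := TensorProduct.exists_finset t
  refine ⟨S.card, fun i => (S.equivFin.symm i).1.1, fun i => (S.equivFin.symm i).1.2, ?_⟩
  rw [hS, ← Finset.sum_attach S (fun p => p.1 ⊗ₜ[k] p.2)]
  exact (Equiv.sum_comp S.equivFin.symm _).symm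

noncomputable def Phi {k H A : Type*} [Field k] [Ring H] [Algebra k H] [Ring A] [Algebra k A]
    (σb σc : H →ₗ[k] H →ₗ[k] A) :
    (H ⊗[k] (H ⊗[k] H)) ⊗[k] (H ⊗[k] (H ⊗[k] H)) →ₗ[k] A :=
  (LinearMap.mul' k A) ∘ₗ
  (LinearMap.lTensor A (LinearMap.mul' k A)) ∘ₗ
  (TensorProduct.map (TensorProduct.lift σc)
    (TensorProduct.map (TensorProduct.lift σb) (TensorProduct.lift σc))) ∘ₗ
  (LinearMap.lTensor (H ⊗[k] H) (TensorProduct.tensorTensorTensorComm k H H H H).toLinearMap) ∘ₗ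
  (TensorProduct.tensorTensorTensorComm k H (H ⊗[k] H) H (H ⊗[k] H)).toLinearMap

lemma Phi_tmul {k H A : Type*} [Field k] [Ring H] [Algebra k H] [Ring A] [Algebra k A]
    (σb σc : H →ₗ[k] H →ₗ[k] A) (a b c p q r : H) :
    Phi σb σc ((a ⊗ₜ[k] (b ⊗ₜ[k] c)) ⊗ₜ[k] (p ⊗ₜ[k] (q ⊗ₜ[k] r))) =
      σc a p * (σb b q * σc c r) := by
  simp [Phi, TensorProduct.tensorTensorTensorComm_tmul, LinearMap.mul'_apply]

lemma Phi_reps {k H A : Type*} [Field k] [Ring H] [Algebra k H] [Ring A] [Algebra k A]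
    (σb σc : H →ₗ[k] H →ₗ[k] A)
    {n1 : ℕ} {m1 : Fin n1 → ℕ} (a b c : (i : Fin n1) → Fin (m1 i) → H)
    {n2 : ℕ} {m2 : Fin n2 → ℕ} (p q r : (j : Fin n2) → Fin (m2 j) → H) :
    Phi σb σc ((∑ i, ∑ s, a i s ⊗ₜ[k] (b i s ⊗ₜ[k] c i s)) ⊗ₜ[k]
        (∑ j, ∑ t, p j t ⊗ₜ[k] (q j t ⊗ₜ[k] r j t))) =
      ∑ i, ∑ s, ∑ j, ∑ t,
        σc (a i s) (p j t) * (σb (b i s) (q j t) * σc (c i s) (r j t)) := by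
  rw [TensorProduct.sum_tmul]
  simp only [TensorProduct.sum_tmul, TensorProduct.tmul_sum, map_sum, Phi_tmul]
  refine Finset.sum_congr rfl fun i _ => ?_
  have : (∑ j, ∑ t, ∑ s, σc (a i s) (p j t) * (σb (b i s) (q j t) * σc (c i s) (r j t)))
      = ∑ j, ∑ s, ∑ t, σc (a i s) (p j t) * (σb (b i s) (q j t) * σc (c i s) (r j t)) :=
    Finset.sum_congr rfl fun j _ => Finset.sum_comm
  rw [this, Finset.sum_comm]

set_option synthInstance.maxHeartbeats 1000000 in
/-- under conditions (1)–(4), (13) and (16), one has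
`σ̄(h⁽¹⁾,k⁽¹⁾)(h⁽²⁾·(k⁽²⁾·1_A)) = σ̄(h,k)`. -/
theorem statement3 {k H A : Type*} [Field k] [Ring H] [Algebra k H] [Ring A] [Algebra k A]
    (W : WeakHopfData k H) (hW : IsWeakHopf W) (ρ : H →ₗ[k] A →ₗ[k] A)
    (h1 : cond1 W ρ) (h2 : cond2 W ρ) (h3 : cond3 W ρ) (h4 : cond4 ρ)
    (σb : H →ₗ[k] H →ₗ[k] A) (hbal : HRBalanced W (fun h g => σb h g))
    (σc : H →ₗ[k] H →ₗ[k] A) (hbalc : HLBalanced W (fun h g => σc h g))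
    (h13 : cond13 W ρ (fun h g => σc h g))
    (h16 : cond16 W ρ (fun h g => σb h g) (fun h g => σc h g)) :
    ∀ (h g : H) (n : ℕ) (x y : Fin n → H) (m : ℕ) (u v : Fin m → H),
      W.Δ h = ∑ i, x i ⊗ₜ[k] y i → W.Δ g = ∑ j, u j ⊗ₜ[k] v j →
        ∑ i, ∑ j, σc (x i) (u j) * ρ (y i) (ρ (v j) 1) = σc h g := by
  intro h g n x y m u v hx hu
  choose my P Q hPQ using fun i => exists_rep (W.Δ (y i))
  choose mx C D hCD using fun i => exists_rep (W.Δ (x i))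
  choose mv R S hRS using fun j => exists_rep (W.Δ (v j))
  choose mu U V hUV using fun j => exists_rep (W.Δ (u j))
  have hX1 : LinearMap.lTensor H W.Δ (W.Δ h) =
      ∑ i, ∑ s, x i ⊗ₜ[k] (P i s ⊗ₜ[k] Q i s) := by
    rw [hx, map_sum]
    exact Finset.sum_congr rfl fun i _ => by
      rw [LinearMap.lTensor_tmul, hPQ i, TensorProduct.tmul_sum]
  have hX2 : LinearMap.lTensor H W.Δ (W.Δ h) =
      ∑ i, ∑ s, C i s ⊗ₜ[k] (D i s ⊗ₜ[k] y i) := by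
    rw [← hW.coassoc h, hx, map_sum, map_sum]
    exact Finset.sum_congr rfl fun i _ => by
      rw [LinearMap.rTensor_tmul, hCD i, TensorProduct.sum_tmul, map_sum]
      exact Finset.sum_congr rfl fun s _ => by rw [TensorProduct.assoc_tmul]
  have hY1 : LinearMap.lTensor H W.Δ (W.Δ g) =
      ∑ j, ∑ t, u j ⊗ₜ[k] (R j t ⊗ₜ[k] S j t) := by
    rw [hu, map_sum]
    exact Finset.sum_congr rfl fun j _ => by
      rw [LinearMap.lTensor_tmul, hRS j, TensorProduct.tmul_sum]
  have hY2 : LinearMap.lTensor H W.Δ (W.Δ g) =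
      ∑ j, ∑ t, U j t ⊗ₜ[k] (V j t ⊗ₜ[k] v j) := by
    rw [← hW.coassoc g, hu, map_sum, map_sum]
    exact Finset.sum_congr rfl fun j _ => by
      rw [LinearMap.rTensor_tmul, hUV j, TensorProduct.sum_tmul, map_sum]
      exact Finset.sum_congr rfl fun t _ => by rw [TensorProduct.assoc_tmul]
  have E1 := Phi_reps σb σc (fun i (_ : Fin (my i)) => x i) P Q
    (fun j (_ : Fin (mv j)) => u j) R S
  have E2 := Phi_reps σb σc C D (fun i (_ : Fin (mx i)) => y i)
    U V (fun j (_ : Fin (mu j)) => v j)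
  have key : (∑ i, ∑ s, ∑ j, ∑ t,
        σc (x i) (u j) * (σb (P i s) (R j t) * σc (Q i s) (S j t)))
      = ∑ i, ∑ s, ∑ j, ∑ t,
        σc (C i s) (U j t) * (σb (D i s) (V j t) * σc (y i) (v j)) := by
    rw [← E1, ← E2, ← hX1, ← hX2, ← hY1, ← hY2]
  calc ∑ i, ∑ j, σc (x i) (u j) * ρ (y i) (ρ (v j) 1)
      = ∑ i, ∑ j, ∑ s, ∑ t,
          σc (x i) (u j) * (σb (P i s) (R j t) * σc (Q i s) (S j t)) := by
        refine Finset.sum_congr rfl fun i _ => Finset.sum_congr rfl fun j _ => ?_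
        rw [← (h16 (y i) (v j) (my i) (P i) (Q i) (mv j) (R j) (S j) (hPQ i) (hRS j)).1,
          Finset.mul_sum]
        exact Finset.sum_congr rfl fun s _ => by rw [Finset.mul_sum]
    _ = ∑ i, ∑ s, ∑ j, ∑ t,
          σc (x i) (u j) * (σb (P i s) (R j t) * σc (Q i s) (S j t)) :=
        Finset.sum_congr rfl fun i _ => Finset.sum_comm
    _ = ∑ i, ∑ s, ∑ j, ∑ t,
          σc (C i s) (U j t) * (σb (D i s) (V j t) * σc (y i) (v j)) := key
    _ = ∑ i, ∑ j, ∑ s, ∑ t,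
          σc (C i s) (U j t) * (σb (D i s) (V j t) * σc (y i) (v j)) :=
        Finset.sum_congr rfl fun i _ => Finset.sum_comm
    _ = ∑ i, ∑ j, ρ (x i * u j) 1 * σc (y i) (v j) := by
        refine Finset.sum_congr rfl fun i _ => Finset.sum_congr rfl fun j _ => ?_
        rw [← (h16 (x i) (u j) (mx i) (C i) (D i) (mu j) (U j) (V j) (hCD i) (hUV j)).2,
          Finset.sum_mul]
        exact Finset.sum_congr rfl fun s _ => by
          rw [Finset.sum_mul]
          exact Finset.sum_congr rfl fun t _ => (mul_assoc _ _ _).symm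
    _ = σc h g := (h13 h g n x y m u v hx hu).symm
end
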